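/- Let Γ be a mixed Moore graph of diameter 2 with undirected degree r and directed degree z, given by an irreflexive relation E on a finite vertex set V. Then Γ is totally regular: for every vertex v, the number of vertices u with E u v ∧ ¬E v u (the directed in-degree of v) equals z. -/

import Mathlib

open Finset

private lemma mm_out_deg {V : Type*} [Fintype V] [DecidableEq V]
    (E : V → V → Prop) [DecidableRel E] (r z : ℕ)
    (hund : ∀ v : V, (Finset.univ.filter fun w => E v w ∧ E w v).card = r)
    (hdir : ∀ v : V, (Finset.univ.filter fun w => E v w ∧ ¬ E w v).card = z)
    (v : V) : (Finset.univ.filter fun w => E v w).card = r + z := by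
  rw [← hund v, ← hdir v, ← Finset.filter_filter, ← Finset.filter_filter]
  exact (Finset.card_filter_add_card_filter_not (fun w => E w v)).symm

/-- Unique walk of length ≤ 2 from `v` to any `u ≠ v`. -/
private lemma mm_unique_walk {V : Type*} [Fintype V] [DecidableEq V]
    (E : V → V → Prop) [DecidableRel E] (r z : ℕ)
    (hirr : ∀ v : V, ¬ E v v)
    (hund : ∀ v : V, (Finset.univ.filter fun w => E v w ∧ E w v).card = r)
    (hdir : ∀ v : V, (Finset.univ.filter fun w => E v w ∧ ¬ E w v).card = z)
    (hdiam : ∀ u v : V, u ≠ v → E u v ∨ ∃ w : V, E u w ∧ E w v)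
    (hcard : Fintype.card V = (z + r) ^ 2 + z + 1)
    (v u : V) (huv : u ≠ v) :
    (Finset.univ.filter fun w => E v w ∧ E w u).card + (if E v u then 1 else 0) = 1 := by
  classical
  set f : V → ℕ := fun u =>
    (Finset.univ.filter fun w => E v w ∧ E w u).card + (if E v u then 1 else 0) with hf
  -- total number of walks of length 2 from v
  have h2 : ∑ x : V, (Finset.univ.filter fun w => E v w ∧ E w x).card = (r + z) * (r + z) := by
    have : ∀ x : V, (Finset.univ.filter fun w => E v w ∧ E w x).card
        = ∑ w : V, (if E v w ∧ E w x then 1 else 0) := fun x => by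
      rw [Finset.card_filter]
    simp only [this]
    rw [Finset.sum_comm]
    have : ∀ w : V, (∑ x : V, if E v w ∧ E w x then 1 else 0)
        = if E v w then r + z else 0 := by
      intro w
      by_cases h : E v w
      · simp only [h, true_and, if_pos h]
        rw [← Finset.card_filter]
        exact mm_out_deg E r z hund hdir w
      · simp [h]
    simp only [this]
    rw [← Finset.sum_filter, Finset.sum_const, mm_out_deg E r z hund hdir v, smul_eq_mul,
      mul_comm]
  have h1 : ∑ x : V, (if E v x then 1 else 0) = r + z := by
    rw [← Finset.card_filter, mm_out_deg E r z hund hdir v]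
  have hsum : ∑ x : V, f x = (r + z) * (r + z) + (r + z) := by
    rw [hf, Finset.sum_add_distrib, h2, h1]
  have hfv : f v = r := by
    simp only [hf, hirr v, if_false, add_zero]
    exact hund v
  have hesum : ∑ x ∈ Finset.univ.erase v, f x = (r + z) * (r + z) + z := by
    have := Finset.sum_erase_add Finset.univ f (Finset.mem_univ v)
    omega
  have hecard : (Finset.univ.erase v).card = (r + z) * (r + z) + z := by
    rw [Finset.card_erase_of_mem (Finset.mem_univ v), Finset.card_univ, hcard]
    ring_nf
    omega
  have hge : ∀ x ∈ Finset.univ.erase v, 1 ≤ f x := by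
    intro x hx
    have hxv : v ≠ x := (Finset.ne_of_mem_erase hx).symm
    rcases hdiam v x hxv with h | ⟨w, hw1, hw2⟩
    · simp [hf, h]
    · have : w ∈ Finset.univ.filter fun w => E v w ∧ E w x := by
        simp [hw1, hw2]
      have := Finset.card_pos.mpr ⟨w, this⟩
      simp only [hf]
      omega
  have key : ∀ x ∈ Finset.univ.erase v, (1 : ℕ) = f x := by
    rw [← Finset.sum_eq_sum_iff_of_le hge]
    rw [hesum, Finset.sum_const, smul_eq_mul, mul_one, hecard]
  exact ((key u (Finset.mem_erase.mpr ⟨huv, Finset.mem_univ u⟩)).symm : f u = 1)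

/-- A mixed Moore graph of diameter 2 is totally regular: every vertex has
directed in-degree equal to `z`. -/
theorem mixed_moore_totally_regular {V : Type*} [Fintype V] [DecidableEq V]
    (E : V → V → Prop) [DecidableRel E] (r z : ℕ)
    (hirr : ∀ v : V, ¬ E v v)
    (hund : ∀ v : V, (Finset.univ.filter fun w => E v w ∧ E w v).card = r)
    (hdir : ∀ v : V, (Finset.univ.filter fun w => E v w ∧ ¬ E w v).card = z)
    (hdiam : ∀ u v : V, u ≠ v → E u v ∨ ∃ w : V, E u w ∧ E w v)
    (hcard : Fintype.card V = (z + r) ^ 2 + z + 1) :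
    ∀ v : V, (Finset.univ.filter fun u => E u v ∧ ¬ E v u).card = z := by
  classical
  have uw := mm_unique_walk E r z hirr hund hdir hdiam hcard
  -- `z ≤` directed in-degree of every vertex
  have hle : ∀ v : V, z ≤ (Finset.univ.filter fun u => E u v ∧ ¬ E v u).card := by
    intro v
    -- for every out-arc neighbor u of v, choose w with E u w, E w v, ¬ E v w
    have hex : ∀ u : V, ∃ w : V, (E v u ∧ ¬ E u v) → (E u w ∧ E w v ∧ ¬ E v w) := by
      intro u
      by_cases h : E v u ∧ ¬ E u v
      · have huv : u ≠ v := fun he => hirr v (he ▸ h.1)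
        rcases hdiam u v huv with h' | ⟨w, hw1, hw2⟩
        · exact absurd h' h.2
        · refine ⟨w, fun _ => ⟨hw1, hw2, fun hvw => ?_⟩⟩
          have hwv : w ≠ v := fun he => hirr v (he ▸ hw2)
          have := uw v w hwv
          rw [if_pos hvw] at this
          have hcard0 : (Finset.univ.filter fun x => E v x ∧ E x w).card = 0 := by omega
          have : u ∈ Finset.univ.filter fun x => E v x ∧ E x w := by simp [h.1, hw1]
          rw [Finset.card_eq_zero] at hcard0
          simp [hcard0] at this
      · exact ⟨u, fun h' => absurd h' h⟩
    choose g hg using hex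
    have := Finset.card_le_card_of_injOn
      (f := g) (s := Finset.univ.filter fun u => E v u ∧ ¬ E u v)
      (t := Finset.univ.filter fun u => E u v ∧ ¬ E v u)
      (by
        intro u hu
        rw [Finset.mem_coe, Finset.mem_filter] at hu
        obtain ⟨h1, h2, h3⟩ := hg u hu.2
        simp [h2, h3])
      (by
        intro u1 hu1 u2 hu2 heq
        simp only [Finset.mem_coe, Finset.mem_filter] at hu1 hu2
        obtain ⟨a1, b1, c1⟩ := hg u1 hu1.2
        obtain ⟨a2, b2, c2⟩ := hg u2 hu2.2
        rw [heq] at a1 b1 c1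
        set w := g u2
        have hwv : w ≠ v := fun he => hirr v (he ▸ b2)
        have huw := uw v w hwv
        rw [if_neg c2] at huw
        have hcard1 : (Finset.univ.filter fun x => E v x ∧ E x w).card = 1 := by omega
        rw [Finset.card_eq_one] at hcard1
        obtain ⟨a, ha⟩ := hcard1
        have m1 : u1 ∈ Finset.univ.filter fun x => E v x ∧ E x w := by
          simp [hu1.2.1, a1]
        have m2 : u2 ∈ Finset.univ.filter fun x => E v x ∧ E x w := by
          simp [hu2.2.1, a2]
        rw [ha, Finset.mem_singleton] at m1 m2
        rw [m1, m2])
    rw [hdir v] at this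
    exact this
  -- double counting: total in-degree = total out-degree
  have hsum : ∑ v : V, (Finset.univ.filter fun u => E u v ∧ ¬ E v u).card
      = ∑ v : V, z := by
    have lhs : ∀ v : V, (Finset.univ.filter fun u => E u v ∧ ¬ E v u).card
        = ∑ u : V, (if E u v ∧ ¬ E v u then 1 else 0) := fun v => by
      rw [Finset.card_filter]
    simp only [lhs]
    rw [Finset.sum_comm]
    refine Finset.sum_congr rfl fun u _ => ?_
    rw [← Finset.card_filter]
    exact hdir u
  have := (Finset.sum_eq_sum_iff_of_le (f := fun _ : V => z)
    (g := fun v : V => (Finset.univ.filter fun u => E u v ∧ ¬ E v u).card)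
    (fun v _ => hle v)).mp (by rw [hsum])
  intro v
  exact (this v (Finset.mem_univ v)).symm
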